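/- If f is holomorphic on the unit polydisc in ℂⁿ with |f(z)| ≤ 1, then for every z in the polydisc, |f(z)| ≤ (|f(0)| + ‖z‖_∞)/(1 + |f(0)| ‖z‖_∞). -/

import Mathlib

open Metric Complex

lemma mobius_ineq (a b : ℂ) (ha : ‖a‖ ≤ 1) (hb : ‖b‖ ≤ 1) :
    ‖b - a‖ ≤ ‖1 - (starRingEnd ℂ) a * b‖ := by
  have h1 : Complex.normSq (1 - (starRingEnd ℂ) a * b) - Complex.normSq (b - a)
      = (1 - Complex.normSq a) * (1 - Complex.normSq b) := by
    simp only [Complex.normSq_apply, Complex.sub_re, Complex.sub_im, Complex.mul_re,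
      Complex.mul_im, Complex.one_re, Complex.one_im, Complex.conj_re, Complex.conj_im]
    ring
  have ha2 : Complex.normSq a ≤ 1 := by
    rw [← Complex.sq_norm]; nlinarith [norm_nonneg a]
  have hb2 : Complex.normSq b ≤ 1 := by
    rw [← Complex.sq_norm]; nlinarith [norm_nonneg b]
  have h2 : Complex.normSq (b - a) ≤ Complex.normSq (1 - (starRingEnd ℂ) a * b) := by
    nlinarith
  calc ‖b - a‖ = Real.sqrt (Complex.normSq (b - a)) := by
        rw [Complex.norm_def]
    _ ≤ Real.sqrt (Complex.normSq (1 - (starRingEnd ℂ) a * b)) := Real.sqrt_le_sqrt h2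
    _ = ‖1 - (starRingEnd ℂ) a * b‖ := by rw [Complex.norm_def]

lemma onevar (g : ℂ → ℂ) (hg : DifferentiableOn ℂ g (ball 0 1))
    (hgb : ∀ w ∈ ball (0:ℂ) 1, ‖g w‖ ≤ 1) {w : ℂ} (hw : w ∈ ball (0:ℂ) 1) :
    ‖g w‖ ≤ (‖g 0‖ + ‖w‖) / (1 + ‖g 0‖ * ‖w‖) := by
  have h0mem : (0:ℂ) ∈ ball (0:ℂ) 1 := mem_ball_self one_pos
  set a := g 0 with ha
  have hA : ‖a‖ ≤ 1 := hgb 0 h0mem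
  have hr : ‖w‖ < 1 := mem_ball_zero_iff.1 hw
  have hrn : (0:ℝ) ≤ ‖w‖ := norm_nonneg w
  have hAn : (0:ℝ) ≤ ‖a‖ := norm_nonneg a
  have hden : (0:ℝ) < 1 + ‖a‖ * ‖w‖ := by positivity
  rw [le_div_iff₀ hden]
  have htle : ‖g w‖ ≤ 1 := hgb w hw
  have htn : (0:ℝ) ≤ ‖g w‖ := norm_nonneg _
  rcases eq_or_lt_of_le hA with heq | hA1
  · nlinarith
  -- Möbius map
  have hdenne : ∀ v ∈ ball (0:ℂ) 1, (1 : ℂ) - (starRingEnd ℂ) a * g v ≠ 0 := by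
    intro v hv
    have h1 : ‖(starRingEnd ℂ) a * g v‖ < 1 := by
      rw [norm_mul, RCLike.norm_conj]
      calc ‖a‖ * ‖g v‖ ≤ ‖a‖ * 1 := by
            exact mul_le_mul_of_nonneg_left (hgb v hv) hAn
        _ < 1 := by linarith
    refine sub_ne_zero.2 fun e => ?_
    rw [← e, norm_one] at h1
    exact lt_irrefl _ h1
  set h : ℂ → ℂ := fun v => (g v - a) / (1 - (starRingEnd ℂ) a * g v) with hh
  have hdiff : DifferentiableOn ℂ h (ball 0 1) := by
    apply DifferentiableOn.div (hg.sub_const a)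
    · exact (differentiableOn_const _).sub ((differentiableOn_const _).mul hg)
    · exact hdenne
  have h0 : h 0 = 0 := by simp [hh, ha]
  have hbd : ∀ v ∈ ball (0:ℂ) 1, ‖h v‖ ≤ 1 := by
    intro v hv
    rw [hh]
    simp only [norm_div]
    rw [div_le_one (norm_pos_iff.2 (hdenne v hv))]
    exact mobius_ineq a (g v) hA (hgb v hv)
  have key : ‖h w‖ ≤ ‖w‖ := by
    apply le_of_forall_pos_le_add
    intro ε hε
    have maps : Set.MapsTo h (ball (0:ℂ) 1) (ball (h 0) (1 + ε)) := by
      intro v hv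
      rw [h0, mem_ball_zero_iff]
      exact lt_of_le_of_lt (hbd v hv) (by linarith)
    have hd := Complex.dist_le_div_mul_dist_of_mapsTo_ball hdiff (maps.mono_right ball_subset_closedBall) hw
    rw [h0, dist_zero_right, dist_zero_right, div_one] at hd
    nlinarith
  -- unfold and conclude
  have hnorm : ‖g w - a‖ ≤ ‖w‖ * ‖1 - (starRingEnd ℂ) a * g w‖ := by
    rw [hh] at key
    simp only [norm_div] at key
    rwa [div_le_iff₀ (norm_pos_iff.2 (hdenne w hw))] at key
  set b := g w with hb'
  set A := ‖a‖ with hAdef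
  set t := ‖b‖ with htdef
  set r := ‖w‖ with hrdef
  set R := ((starRingEnd ℂ) a * b).re with hR
  have E1 : Complex.normSq (b - a) = Complex.normSq b + Complex.normSq a - 2 * R := by
    simp only [hR, Complex.normSq_apply, Complex.sub_re, Complex.sub_im, Complex.mul_re,
      Complex.mul_im, Complex.conj_re, Complex.conj_im]
    ring
  have E2 : Complex.normSq (1 - (starRingEnd ℂ) a * b)
      = 1 + Complex.normSq a * Complex.normSq b - 2 * R := by
    simp only [hR, Complex.normSq_apply, Complex.sub_re, Complex.sub_im, Complex.mul_re,
      Complex.mul_im, Complex.one_re, Complex.one_im, Complex.conj_re, Complex.conj_im]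
    ring
  have n1 : Complex.normSq (b - a) = ‖b - a‖ ^ 2 := by
    rw [← Complex.sq_norm]
  have n2 : Complex.normSq (1 - (starRingEnd ℂ) a * b)
      = ‖1 - (starRingEnd ℂ) a * b‖ ^ 2 := by
    rw [← Complex.sq_norm]
  have na : Complex.normSq a = A ^ 2 := by
    rw [hAdef, ← Complex.sq_norm]
  have nb : Complex.normSq b = t ^ 2 := by
    rw [htdef, ← Complex.sq_norm]
  have hsq : t ^ 2 + A ^ 2 - 2 * R ≤ r ^ 2 * (1 + A ^ 2 * t ^ 2 - 2 * R) := by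
    have h' := mul_self_le_mul_self (norm_nonneg (b - a)) hnorm
    have p1 : ‖b - a‖ ^ 2 = ‖b - a‖ * ‖b - a‖ := sq ‖b - a‖ ▸ rfl
    have p3 : r * ‖1 - (starRingEnd ℂ) a * b‖ * (r * ‖1 - (starRingEnd ℂ) a * b‖)
        = r ^ 2 * ‖1 - (starRingEnd ℂ) a * b‖ ^ 2 := by ring
    have p4 : r ^ 2 * Complex.normSq (1 - (starRingEnd ℂ) a * b)
        = r ^ 2 * (1 + A ^ 2 * t ^ 2 - 2 * R) := by rw [E2, na, nb]
    have p5 : r ^ 2 * Complex.normSq (1 - (starRingEnd ℂ) a * b)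
        = r ^ 2 * ‖1 - (starRingEnd ℂ) a * b‖ ^ 2 := by rw [n2]
    linarith [E1, n1, na, nb]
  have hRb : |R| ≤ A * t := by
    calc |R| ≤ ‖(starRingEnd ℂ) a * b‖ := Complex.abs_re_le_norm _
      _ = A * t := by rw [norm_mul, Complex.norm_conj]
  obtain ⟨hR1, hR2⟩ := abs_le.1 hRb
  clear_value b A t r R
  clear hRb hg hgb hw h0mem ha hdenne hh hdiff h0 hbd key hnorm hR E1 E2 n1 n2 na nb
  clear hAdef htdef hrdef hb'
  clear a b g h w
  by_cases hcase : (1 - A * r) * t + (r - A) ≤ 0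
  · have h1 : t * (1 - A * r) ≤ A - r := by linarith
    have h2 : (0:ℝ) < 1 - A * r := by nlinarith
    nlinarith [mul_le_mul_of_nonneg_right h1 (le_of_lt hden),
      mul_nonneg hrn (by nlinarith : (0:ℝ) ≤ 1 - A ^ 2), h2]
  · push_neg at hcase
    nlinarith [mul_nonneg (by nlinarith : (0:ℝ) ≤ 1 - r ^ 2) (by linarith : (0:ℝ) ≤ A * t - R),
      hcase, hsq]

theorem schwarz_pick_polydisc (n : ℕ) (f : (Fin n → ℂ) → ℂ)
    (hf : DifferentiableOn ℂ f (Metric.ball (0 : Fin n → ℂ) 1))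
    (hb : ∀ z ∈ Metric.ball (0 : Fin n → ℂ) 1, ‖f z‖ ≤ 1) :
    ∀ z ∈ Metric.ball (0 : Fin n → ℂ) 1,
      ‖f z‖ ≤ (‖f 0‖ + ‖z‖) / (1 + ‖f 0‖ * ‖z‖) := by
  intro z hz
  rcases eq_or_ne z 0 with rfl | hz0
  · simpa using hb 0 (mem_ball_self one_pos)
  · have hzn : ‖z‖ < 1 := mem_ball_zero_iff.1 hz
    have hzpos : (0:ℝ) < ‖z‖ := norm_pos_iff.2 hz0
    have hzc : ((‖z‖ : ℝ) : ℂ) ≠ 0 := by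
      exact_mod_cast (ne_of_gt hzpos)
    set u : Fin n → ℂ := ((‖z‖ : ℝ) : ℂ)⁻¹ • z with hu
    have hun : ‖u‖ = 1 := by
      rw [hu, norm_smul, norm_inv, Complex.norm_real, Real.norm_eq_abs,
        abs_of_pos hzpos, inv_mul_cancel₀ (ne_of_gt hzpos)]
    have smap : ∀ w ∈ ball (0:ℂ) 1, w • u ∈ Metric.ball (0 : Fin n → ℂ) 1 := by
      intro w hw
      rw [mem_ball_zero_iff, norm_smul, hun, mul_one]
      exact mem_ball_zero_iff.1 hw
    set g : ℂ → ℂ := fun w => f (w • u) with hg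
    have hgdiff : DifferentiableOn ℂ g (ball 0 1) := by
      apply DifferentiableOn.comp hf
      · exact (differentiable_id.smul_const u).differentiableOn
      · exact fun w hw => smap w hw
    have hgb : ∀ w ∈ ball (0:ℂ) 1, ‖g w‖ ≤ 1 := fun w hw => hb _ (smap w hw)
    have hg0 : g 0 = f 0 := by simp [hg]
    have hgz : g ((‖z‖ : ℝ) : ℂ) = f z := by
      rw [hg]
      simp only [hu, smul_smul, mul_inv_cancel₀ hzc, one_smul]
    have hwmem : ((‖z‖ : ℝ) : ℂ) ∈ ball (0:ℂ) 1 := by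
      rw [mem_ball_zero_iff, Complex.norm_real, Real.norm_eq_abs, abs_of_pos hzpos]
      exact hzn
    have := onevar g hgdiff hgb hwmem
    rwa [hg0, hgz, Complex.norm_real, Real.norm_eq_abs, abs_of_pos hzpos] at this
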